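/- The blocked distribution is stable: if two records a, b in the input have the same bucket id and a precedes b in the input order, then the output position of a is strictly less than the output position of b. -/

import Mathlib

/-- Stability of blocked distribution: if two records `a`, `b` in the input have
the same bucket id and `a` precedes `b` in input order, then the output position
of `a` is strictly less than that of `b`. -/
theorem blocked_distributing_stable (n m l B : ℕ) (hn : n = m * l)
    (bucket : Fin n → ℕ) (hB : ∀ p, bucket p < B)
    (C X : ℕ → ℕ → ℕ)
    (hC : ∀ i j, C i j =
      ((Finset.univ : Finset (Fin n)).filter
        (fun p : Fin n => (p : ℕ) / l = i ∧ bucket p = j)).card)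
    (hX : ∀ i j, X i j =
      ∑ q ∈ (Finset.range m ×ˢ Finset.range B).filter
        (fun q => q.2 < j ∨ (q.2 = j ∧ q.1 < i)), C q.1 q.2)
    (pos : Fin n → ℕ)
    (hpos : ∀ p, pos p =
      X ((p : ℕ) / l) (bucket p) +
        ((Finset.univ : Finset (Fin n)).filter
          (fun q : Fin n => (q : ℕ) / l = (p : ℕ) / l ∧ bucket q = bucket p ∧
            (q : ℕ) < (p : ℕ))).card) :
    ∀ a b : Fin n, bucket a = bucket b → a < b → pos a < pos b := by
  intro a b hbj hab
  have hl : 0 < l := by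
    rcases Nat.eq_zero_or_pos l with h | h
    · rw [h, Nat.mul_zero] at hn
      have := a.2; omega
    · exact h
  have hab' : (a : ℕ) < (b : ℕ) := hab
  set j := bucket a with hj
  have hia : (a : ℕ) / l ≤ (b : ℕ) / l := Nat.div_le_div_right (le_of_lt hab')
  rw [hpos a, hpos b, ← hj, ← hbj]
  rcases eq_or_lt_of_le hia with heq | hlt
  · -- same subarray
    rw [heq]
    apply Nat.add_lt_add_left
    apply Finset.card_lt_card
    constructor
    · intro q hq
      simp only [Finset.mem_filter, Finset.mem_univ, true_and] at *
      omega
    · intro hsub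
      have ha : a ∈ (Finset.univ : Finset (Fin n)).filter
          (fun q : Fin n => (q : ℕ) / l = (b : ℕ) / l ∧ bucket q = bucket a ∧
            (q : ℕ) < (b : ℕ)) := by
        exact Finset.mem_filter.mpr ⟨Finset.mem_univ a, heq, hj.symm, hab'⟩
      have := hsub ha
      simp only [Finset.mem_filter, Finset.mem_univ, true_and] at this
      omega
  · -- a in earlier subarray
    have hstep1 : X ((a : ℕ) / l) j +
        ((Finset.univ : Finset (Fin n)).filter
          (fun q : Fin n => (q : ℕ) / l = (a : ℕ) / l ∧ bucket q = j ∧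
            (q : ℕ) < (a : ℕ))).card < X ((a : ℕ) / l) j + C ((a : ℕ) / l) j := by
      apply Nat.add_lt_add_left
      rw [hC]
      apply Finset.card_lt_card
      constructor
      · intro q hq
        simp only [Finset.mem_filter, Finset.mem_univ, true_and] at *
        exact ⟨hq.1, hq.2.1⟩
      · intro hsub
        have ha : a ∈ (Finset.univ : Finset (Fin n)).filter
            (fun p : Fin n => (p : ℕ) / l = (a : ℕ) / l ∧ bucket p = j) := by simp [hj]
        have := hsub ha
        simp only [Finset.mem_filter, Finset.mem_univ, true_and] at this
        omega
    have hstep2 : X ((a : ℕ) / l) j + C ((a : ℕ) / l) j ≤ X ((b : ℕ) / l) j := by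
      rw [hX, hX]
      have ham : (a : ℕ) / l < m := by
        rw [Nat.div_lt_iff_lt_mul hl]
        have := a.2; omega
      have hnotmem : ((a : ℕ) / l, j) ∉
          (Finset.range m ×ˢ Finset.range B).filter
            (fun q => q.2 < j ∨ (q.2 = j ∧ q.1 < (a : ℕ) / l)) := by
        simp
      have hins := Finset.sum_insert (f := fun q : ℕ × ℕ => C q.1 q.2) hnotmem
      rw [add_comm, ← hins]
      apply Finset.sum_le_sum_of_subset
      intro q hq
      simp only [Finset.mem_insert, Finset.mem_filter, Finset.mem_product,
        Finset.mem_range] at *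
      rcases hq with rfl | hq
      · exact ⟨⟨ham, hB a⟩, Or.inr ⟨rfl, hlt⟩⟩
      · exact ⟨hq.1, by omega⟩
    calc X ((a : ℕ) / l) j + _ < X ((a : ℕ) / l) j + C ((a : ℕ) / l) j := hstep1
      _ ≤ X ((b : ℕ) / l) j := hstep2
      _ ≤ _ := Nat.le_add_right _ _
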